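/- Let m = 4^ℓ and n = 3^ℓ for some ℓ ∈ ℕ. For i ∈ {1,…,m−1} with base-4 digits (i₀,…,i_{ℓ−1}) and j ∈ {0,…,n−1} with base-3 digits (j₀,…,j_{ℓ−1}), define the membership relation: i ∈ T_j iff, letting t* be the largest t with i_t ≠ 0, one has i_{t*} − 1 ≠ j_{t*}. Then for every i ∈ {1,…,m−1}, the number of j ∈ {0,…,n−1} with i ∈ T_j equals 2·3^{ℓ−1} (i.e., exactly 2/3 of all subsamples contain the i-th point). -/

import Mathlib

private lemma bound_key (a q B T : ℕ) (ha : a < T) (hq : q < B) : a + T * q < T * B := by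
  calc a + T * q < T + T * q := by omega
    _ = T * (q + 1) := by ring
    _ ≤ T * B := Nat.mul_le_mul_left _ (by omega)

private lemma split_key (T j : ℕ) :
    j = j % T + T * (j / T % 3) + (T * 3) * (j / (T * 3)) := by
  have h1 := Nat.div_add_mod j (T * 3)
  have h2 : j % (T * 3) = j % T + T * (j / T % 3) := Nat.mod_mul
  omega

private lemma count_digit (ℓ t c : ℕ) (ht : t < ℓ) (hc : c < 3) :
    ((Finset.range (3 ^ ℓ)).filter (fun j => j / 3 ^ t % 3 = c)).card = 3 ^ (ℓ - 1) := by
  have hT : (0:ℕ) < 3 ^ t := by positivity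
  have hts : (3:ℕ) ^ (t + 1) = 3 ^ t * 3 := pow_succ 3 t
  rw [← Finset.card_range (3 ^ (ℓ - 1))]
  apply Finset.card_bij' (fun j _ => j % 3 ^ t + 3 ^ t * (j / 3 ^ (t + 1)))
    (fun n _ => n % 3 ^ t + 3 ^ t * c + 3 ^ (t + 1) * (n / 3 ^ t))
  case hi =>
    intro j hj
    simp only [Finset.mem_filter, Finset.mem_range] at hj
    simp only [Finset.mem_range]
    have h1 : j % 3 ^ t < 3 ^ t := Nat.mod_lt _ hT
    have h2 : j / 3 ^ (t + 1) < 3 ^ (ℓ - 1 - t) := by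
      rw [Nat.div_lt_iff_lt_mul (by positivity)]
      calc j < 3 ^ ℓ := hj.1
        _ = 3 ^ (ℓ - 1 - t) * 3 ^ (t + 1) := by rw [← pow_add]; congr 1; omega
    have hb := bound_key (j % 3 ^ t) (j / 3 ^ (t + 1)) (3 ^ (ℓ - 1 - t)) (3 ^ t) h1 h2
    have hp : (3:ℕ) ^ t * 3 ^ (ℓ - 1 - t) = 3 ^ (ℓ - 1) := by rw [← pow_add]; congr 1; omega
    omega
  case hj =>
    intro n hn
    simp only [Finset.mem_range] at hn
    simp only [Finset.mem_filter, Finset.mem_range]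
    have h1 : n % 3 ^ t < 3 ^ t := Nat.mod_lt _ hT
    have h2 : n / 3 ^ t < 3 ^ (ℓ - 1 - t) := by
      rw [Nat.div_lt_iff_lt_mul hT]
      calc n < 3 ^ (ℓ - 1) := hn
        _ = 3 ^ (ℓ - 1 - t) * 3 ^ t := by rw [← pow_add]; congr 1; omega
    have heq : n % 3 ^ t + 3 ^ t * c + 3 ^ (t + 1) * (n / 3 ^ t)
        = n % 3 ^ t + 3 ^ t * (c + 3 * (n / 3 ^ t)) := by rw [hts]; ring
    constructor
    · rw [heq]
      have hbnd : c + 3 * (n / 3 ^ t) < 3 * 3 ^ (ℓ - 1 - t) := by omega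
      have hb := bound_key (n % 3 ^ t) (c + 3 * (n / 3 ^ t)) (3 * 3 ^ (ℓ - 1 - t)) (3 ^ t) h1 hbnd
      calc n % 3 ^ t + 3 ^ t * (c + 3 * (n / 3 ^ t)) < 3 ^ t * (3 * 3 ^ (ℓ - 1 - t)) := hb
        _ = 3 ^ (t + 1) * 3 ^ (ℓ - 1 - t) := by rw [hts]; ring
        _ = 3 ^ ℓ := by rw [← pow_add]; congr 1; omega
    · rw [heq, Nat.add_mul_div_left _ _ hT, Nat.div_eq_of_lt h1, Nat.zero_add,
        Nat.add_mul_mod_self_left, Nat.mod_eq_of_lt hc]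
  case left_inv =>
    intro j hj
    simp only [Finset.mem_filter, Finset.mem_range] at hj
    have h1 : j % 3 ^ t < 3 ^ t := Nat.mod_lt _ hT
    have hm : (j % 3 ^ t + 3 ^ t * (j / 3 ^ (t + 1))) % 3 ^ t = j % 3 ^ t := by
      rw [Nat.add_mul_mod_self_left, Nat.mod_eq_of_lt h1]
    have hd : (j % 3 ^ t + 3 ^ t * (j / 3 ^ (t + 1))) / 3 ^ t = j / 3 ^ (t + 1) := by
      rw [Nat.add_mul_div_left _ _ hT, Nat.div_eq_of_lt h1, Nat.zero_add]

    rw [hm, hd, hts]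
    have hsplit := split_key (3 ^ t) j
    rw [hj.2] at hsplit
    omega
  case right_inv =>
    intro n hn
    simp only [Finset.mem_range] at hn
    have h1 : n % 3 ^ t < 3 ^ t := Nat.mod_lt _ hT
    have heq : n % 3 ^ t + 3 ^ t * c + 3 ^ (t + 1) * (n / 3 ^ t)
        = n % 3 ^ t + 3 ^ t * (c + 3 * (n / 3 ^ t)) := by rw [hts]; ring
    have hm : (n % 3 ^ t + 3 ^ t * c + 3 ^ (t + 1) * (n / 3 ^ t)) % 3 ^ t = n % 3 ^ t := by
      rw [heq, Nat.add_mul_mod_self_left, Nat.mod_eq_of_lt h1]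
    have hsmall : n % 3 ^ t + 3 ^ t * c < 3 ^ (t + 1) := by
      have : 3 ^ t * c ≤ 3 ^ t * 2 := Nat.mul_le_mul_left _ (by omega)
      rw [hts]; omega
    have hd : (n % 3 ^ t + 3 ^ t * c + 3 ^ (t + 1) * (n / 3 ^ t)) / 3 ^ (t + 1) = n / 3 ^ t := by
      rw [Nat.add_mul_div_left _ _ (show (0:ℕ) < 3 ^ (t+1) by positivity),
        Nat.div_eq_of_lt hsmall, Nat.zero_add]

    rw [hm, hd]
    exact Nat.mod_add_div n (3 ^ t)


/-- Direct index description of subsample membership: point `i` (with base-4 digits)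
belongs to subsample `j` (with base-3 digits) iff, letting `t*` be the largest `t < ℓ`
with `i_t ≠ 0`, one has `i_{t*} - 1 ≠ j_{t*}`. -/
def inSubsample (ℓ i j : ℕ) : Prop :=
  ∃ t < ℓ, (i / 4 ^ t % 4 ≠ 0) ∧ (∀ s, t < s → s < ℓ → i / 4 ^ s % 4 = 0) ∧
    (i / 4 ^ t % 4) - 1 ≠ j / 3 ^ t % 3

open Classical in
theorem stmt_7 (ℓ : ℕ) (i : ℕ) (hi1 : 1 ≤ i) (hi2 : i < 4 ^ ℓ) :
    ((Finset.range (3 ^ ℓ)).filter (fun j => inSubsample ℓ i j)).card = 2 * 3 ^ (ℓ - 1) := by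
  have hℓ : 1 ≤ ℓ := by
    rcases Nat.eq_zero_or_pos ℓ with h | h
    · subst h; simp at hi2; omega
    · exact h
  set t := Nat.log 4 i with htdef
  have hi0 : i ≠ 0 := by omega
  have ht4 : 4 ^ t ≤ i := Nat.pow_log_le_self 4 hi0
  have ht4' : i < 4 ^ (t + 1) := Nat.lt_pow_succ_log_self (by norm_num) i
  have htℓ : t < ℓ := Nat.log_lt_of_lt_pow hi0 hi2
  have hq1 : 1 ≤ i / 4 ^ t := (Nat.one_le_div_iff (by positivity)).2 ht4
  have hq2 : i / 4 ^ t < 4 := by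
    rw [Nat.div_lt_iff_lt_mul (by positivity)]
    calc i < 4 ^ (t + 1) := ht4'
      _ = 4 * 4 ^ t := by rw [pow_succ]; ring
  have hdm : i / 4 ^ t % 4 = i / 4 ^ t := Nat.mod_eq_of_lt hq2
  set d := i / 4 ^ t % 4 with hddef
  have hd1 : 1 ≤ d := by omega
  have hd3 : d < 4 := by omega
  have hhigh : ∀ s, t < s → i / 4 ^ s % 4 = 0 := by
    intro s hs
    have : i < 4 ^ s := lt_of_lt_of_le ht4' (Nat.pow_le_pow_right (by norm_num) hs)
    rw [Nat.div_eq_of_lt this]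
  have hfe : (Finset.range (3 ^ ℓ)).filter (fun j => inSubsample ℓ i j)
      = (Finset.range (3 ^ ℓ)).filter (fun j => ¬ (j / 3 ^ t % 3 = d - 1)) := by
    apply Finset.filter_congr
    intro j _
    simp only [inSubsample, eq_iff_iff]
    constructor
    · rintro ⟨t', ht', hne, hh, hx⟩
      have htt : t' = t := by
        have h1 : t' ≤ t := by
          have : 4 ^ t' ≤ i := by
            by_contra hcon
            push_neg at hcon
            exact hne (by rw [Nat.div_eq_of_lt hcon])
          exact (Nat.le_log_iff_pow_le (by norm_num) hi0).2 this
        rcases Nat.lt_or_ge t' t with h2 | h2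
        · exact absurd (hh t h2 htℓ) (by rw [hddef] at hd1; omega)
        · omega
      subst htt
      exact fun h => hx (by rw [← hddef] at *; omega)
    · intro h
      exact ⟨t, htℓ, by omega, fun s hs _ => hhigh s hs, fun hcon => h hcon.symm⟩
  rw [hfe, Finset.filter_not, Finset.card_sdiff_of_subset (Finset.filter_subset _ _),
    Finset.card_range, count_digit ℓ t (d - 1) htℓ (by omega)]
  have : (3:ℕ) ^ ℓ = 3 * 3 ^ (ℓ - 1) := by
    rw [← pow_succ']
    congr 1
    omega
  omega
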